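/- For compact Hausdorff spaces X and Y, the continuous-function C*-algebra of the topological join X ∗ Y is isomorphic to the algebra of continuous functions f : [0,1] → C(X) ⊗ C(Y) such that f(0) ∈ C(X) ⊗ ℂ·1 and f(1) ∈ ℂ·1 ⊗ C(Y). -/

import Mathlib

noncomputable section

/-- The relation on `X × [0,1]` defining the unreduced cone: collapse `X × {0}`. -/
def coneRel (X : Type) : (X × unitInterval) → (X × unitInterval) → Prop :=
  fun p q => p = q ∨ (p.2 = 0 ∧ q.2 = 0)

/-- The unreduced cone `CX = (X × [0,1]) / (X × {0})`. -/
def ConeSpace (X : Type) [TopologicalSpace X] : Type := Quot (coneRel X)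

instance (X : Type) [TopologicalSpace X] : TopologicalSpace (ConeSpace X) :=
  inferInstanceAs (TopologicalSpace (Quot _))

/-- The height function `CX → ℝ` induced by `(x, t) ↦ t`. -/
def coneHeight {X : Type} [TopologicalSpace X] : ConeSpace X → ℝ :=
  Quot.lift (fun p => (p.2 : ℝ)) (by
    rintro a b (rfl | ⟨h1, h2⟩)
    · rfl
    · show ((a.2 : unitInterval) : ℝ) = ((b.2 : unitInterval) : ℝ)
      rw [h1, h2])

/-- The relation on `X × Y × [0,1]` defining the join:
`(x, y, 1) ∼ (x', y, 1)` and `(x, y, 0) ∼ (x, y', 0)`. -/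
def joinRel (X Y : Type) : (X × Y × unitInterval) → (X × Y × unitInterval) → Prop :=
  fun p q => p = q ∨ (p.2.2 = 0 ∧ q.2.2 = 0 ∧ p.1 = q.1) ∨
    (p.2.2 = 1 ∧ q.2.2 = 1 ∧ p.2.1 = q.2.1)

/-- The topological join `X ∗ Y = (X × Y × [0,1]) / ∼`. -/
def JoinSpace (X Y : Type) [TopologicalSpace X] [TopologicalSpace Y] : Type :=
  Quot (joinRel X Y)

instance (X Y : Type) [TopologicalSpace X] [TopologicalSpace Y] :
    TopologicalSpace (JoinSpace X Y) :=
  inferInstanceAs (TopologicalSpace (Quot _))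

/-- Evaluation at a point, as a star algebra homomorphism. -/
def evalSAH {X : Type} [TopologicalSpace X] (A : Type) [CStarAlgebra A] (x : X) :
    C(X, A) →⋆ₐ[ℂ] A where
  toFun f := f x
  map_one' := rfl
  map_mul' _ _ := rfl
  map_zero' := rfl
  map_add' _ _ := rfl
  commutes' _ := rfl
  map_star' _ := rfl

namespace JoinProof

variable (X Y : Type) [TopologicalSpace X] [CompactSpace X] [T2Space X]
  [TopologicalSpace Y] [CompactSpace Y] [T2Space Y]

/-- The quotient map onto the join, as a continuous map. -/
def jq : C(X × Y × unitInterval, JoinSpace X Y) :=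
  ⟨Quot.mk _, continuous_quot_mk⟩

/-- Reordering `(t, (x, y)) ↦ (x, y, t)`. -/
def swapMap : C(unitInterval × (X × Y), X × Y × unitInterval) :=
  ⟨fun p => (p.2.1, p.2.2, p.1), by fun_prop⟩

/-- The basic hom `C(X ∗ Y) → C([0,1], C(X × Y))`. -/
def Phi : C(JoinSpace X Y, ℂ) →⋆ₐ[ℂ] C(unitInterval, C(X × Y, ℂ)) where
  toFun g := ContinuousMap.curry ((g.comp (jq X Y)).comp (swapMap X Y))
  map_one' := by ext t p; rfl
  map_mul' _ _ := by ext t p; rfl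
  map_zero' := by ext t p; rfl
  map_add' _ _ := by ext t p; rfl
  commutes' _ := by ext t p; rfl
  map_star' _ := by ext t p; rfl

theorem Phi_apply (g : C(JoinSpace X Y, ℂ)) (t : unitInterval) (p : X × Y) :
    Phi X Y g t p = g (Quot.mk _ (p.1, p.2, t)) := rfl

end JoinProof

namespace JoinProof

variable (X Y : Type) [TopologicalSpace X] [CompactSpace X] [T2Space X]
  [TopologicalSpace Y] [CompactSpace Y] [T2Space Y]

abbrev TargetAlg : StarSubalgebra ℂ C(unitInterval, C(X × Y, ℂ)) :=
  (StarSubalgebra.comap (evalSAH (C(X × Y, ℂ)) (0 : unitInterval))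
      (ContinuousMap.compStarAlgHom' ℂ ℂ
        (⟨Prod.fst, continuous_fst⟩ : C(X × Y, X))).range) ⊓
    (StarSubalgebra.comap (evalSAH (C(X × Y, ℂ)) (1 : unitInterval))
      (ContinuousMap.compStarAlgHom' ℂ ℂ
        (⟨Prod.snd, continuous_snd⟩ : C(X × Y, Y))).range)

theorem Phi_mem [Nonempty X] [Nonempty Y] (g : C(JoinSpace X Y, ℂ)) :
    Phi X Y g ∈ TargetAlg X Y := by
  obtain ⟨y₀⟩ := ‹Nonempty Y›
  obtain ⟨x₀⟩ := ‹Nonempty X›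
  constructor
  · refine ⟨⟨fun x => g (Quot.mk _ (x, y₀, 0)), g.continuous.comp (continuous_quot_mk.comp (by fun_prop : Continuous fun x : X => ((x, y₀, (0 : unitInterval)) : X × Y × unitInterval)))⟩, ?_⟩
    ext p
    show g (Quot.mk _ (p.1, y₀, 0)) = g (Quot.mk _ (p.1, p.2, 0))
    exact congrArg g (Quot.sound (Or.inr (Or.inl ⟨rfl, rfl, rfl⟩)))
  · refine ⟨⟨fun y => g (Quot.mk _ (x₀, y, 1)), g.continuous.comp (continuous_quot_mk.comp (by fun_prop : Continuous fun y : Y => ((x₀, y, (1 : unitInterval)) : X × Y × unitInterval)))⟩, ?_⟩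
    ext p
    show g (Quot.mk _ (x₀, p.2, 1)) = g (Quot.mk _ (p.1, p.2, 1))
    exact congrArg g (Quot.sound (Or.inr (Or.inr ⟨rfl, rfl, rfl⟩)))

theorem Phi_bij [Nonempty X] [Nonempty Y] :
    Function.Bijective ((Phi X Y).codRestrict (TargetAlg X Y) (Phi_mem X Y)) := by
  constructor
  · rw [StarAlgHom.injective_codRestrict]
    intro g g' h
    ext q
    obtain ⟨p, rfl⟩ := Quot.exists_rep q
    have := congrFun (congrArg (fun F => fun t xy => (F t) xy) h) p.2.2
    exact congrFun this (p.1, p.2.1)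
  · rintro ⟨f, hf0, hf1⟩
    obtain ⟨h0, hh0⟩ := hf0
    obtain ⟨h1, hh1⟩ := hf1
    have wd : ∀ a b, joinRel X Y a b →
        (fun p : X × Y × unitInterval => f p.2.2 (p.1, p.2.1)) a
          = (fun p : X × Y × unitInterval => f p.2.2 (p.1, p.2.1)) b := by
      rintro a b (rfl | ⟨ha, hb, hx⟩ | ⟨ha, hb, hy⟩)
      · rfl
      · have hh0' : h0.comp ⟨Prod.fst, continuous_fst⟩ = f 0 := hh0
        simp only [ha, hb, hx]
        rw [← hh0']
        rfl
      · have hh1' : h1.comp ⟨Prod.snd, continuous_snd⟩ = f 1 := hh1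
        simp only [ha, hb, hy]
        rw [← hh1']
        rfl
    have cont : Continuous (fun p : X × Y × unitInterval => f p.2.2 (p.1, p.2.1)) := by
      have h1 := (ContinuousMap.uncurry f).continuous
      have h2 : Continuous (fun p : X × Y × unitInterval => (p.2.2, (p.1, p.2.1))) := by
        fun_prop
      exact h1.comp h2
    refine ⟨⟨Quot.lift _ wd, continuous_quot_lift wd cont⟩, ?_⟩
    apply Subtype.ext
    ext t p
    rfl

end JoinProof


set_option maxHeartbeats 1000000 in
set_option synthInstance.maxHeartbeats 400000 in
/-- For compact Hausdorff spaces `X` and `Y`, the C*-algebra `C(X ∗ Y)` of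
continuous functions on the topological join is isomorphic to the algebra of continuous
functions `f : [0,1] → C(X) ⊗ C(Y)` such that `f(0) ∈ C(X) ⊗ ℂ·1` and `f(1) ∈ ℂ·1 ⊗ C(Y)`.
(For commutative algebras the minimal C*-tensor product is `C(X) ⊗ C(Y) = C(X × Y)`, and
the subalgebras `C(X) ⊗ ℂ·1`, `ℂ·1 ⊗ C(Y)` are the pullbacks of the two projections.) -/
theorem functions_on_join_iso
    (X Y : Type) [TopologicalSpace X] [CompactSpace X] [T2Space X]
    [TopologicalSpace Y] [CompactSpace Y] [T2Space Y] :
    Nonempty (C(JoinSpace X Y, ℂ) ≃⋆ₐ[ℂ]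
      ↥((StarSubalgebra.comap (evalSAH (C(X × Y, ℂ)) (0 : unitInterval))
          (ContinuousMap.compStarAlgHom' ℂ ℂ
            (⟨Prod.fst, continuous_fst⟩ : C(X × Y, X))).range) ⊓
        (StarSubalgebra.comap (evalSAH (C(X × Y, ℂ)) (1 : unitInterval))
          (ContinuousMap.compStarAlgHom' ℂ ℂ
            (⟨Prod.snd, continuous_snd⟩ : C(X × Y, Y))).range))) := by
  by_cases hXY : Nonempty X ∧ Nonempty Y
  · obtain ⟨hX, hY⟩ := hXY
    exact ⟨StarAlgEquiv.ofBijective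
      ((JoinProof.Phi X Y).codRestrict (JoinProof.TargetAlg X Y) (JoinProof.Phi_mem X Y))
      (JoinProof.Phi_bij X Y)⟩
  · haveI hE : IsEmpty (X × Y) := by
      rcases not_and_or.mp hXY with h | h
      · haveI := not_nonempty_iff.mp h; infer_instance
      · haveI := not_nonempty_iff.mp h; infer_instance
    haveI : IsEmpty (X × Y × unitInterval) := by
      rcases not_and_or.mp hXY with h | h
      · haveI := not_nonempty_iff.mp h; infer_instance
      · haveI := not_nonempty_iff.mp h; infer_instance
    haveI : IsEmpty (JoinSpace X Y) :=
      ⟨fun q => @Quot.ind _ _ (fun _ => False) (fun p => isEmptyElim p) q⟩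
    haveI : Subsingleton C(JoinSpace X Y, ℂ) :=
      ⟨fun f g => ContinuousMap.ext fun x => isEmptyElim x⟩
    haveI : Subsingleton C(X × Y, ℂ) :=
      ⟨fun f g => ContinuousMap.ext fun x => isEmptyElim x⟩
    haveI : Subsingleton C(unitInterval, C(X × Y, ℂ)) :=
      ⟨fun f g => ContinuousMap.ext fun t => Subsingleton.elim _ _⟩
    exact ⟨{ toFun := fun _ => 0
             invFun := fun _ => 0
             left_inv := fun _ => Subsingleton.elim _ _
             right_inv := fun _ => Subsingleton.elim _ _
             map_mul' := fun _ _ => Subsingleton.elim _ _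
             map_add' := fun _ _ => Subsingleton.elim _ _
             map_smul' := fun _ _ => Subsingleton.elim _ _
             map_star' := fun _ => Subsingleton.elim _ _ }⟩
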